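/- Fix w ∈ ℝ (a weight), g ∈ ℝ (a loss-gradient coefficient), σ' > 0, and c > 0 constants. The linear ODE λ'(t) = c(λ(t) − σ' w μ(t) − g) (where μ is a fixed continuous bounded function representing children costates) has the property that if λ_c denotes a solution that remains bounded uniformly in c on [0,T], then for every t in (0,T), (λ_c(t) − σ' w μ(t) − g) → 0 as c → ∞, i.e., in the formal limit of infinite propagation speed the dynamical equation reduces to the algebraic backpropagation relation λ = σ' w μ + g. -/

import Mathlib

lemma key_aux (c δ ε : ℝ) (hc : 0 < c) (hδ : 0 < δ) (hε : 0 < ε)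
    (F L : ℝ → ℝ) (t₀ : ℝ)
    (hode : ∀ s, HasDerivAt L (c * (L s - F s)) s)
    (hF : ∀ s ∈ Set.Icc t₀ (t₀ + δ), F s - F t₀ ≤ ε / 2)
    (hstart : ε ≤ L t₀ - F t₀) :
    Real.exp (c * δ) * (ε / 2) ≤ L (t₀ + δ) - F t₀ - ε / 2 := by
  set φ : ℝ → ℝ := fun s => Real.exp (-(c * s)) * (L s - F t₀ - ε / 2) with hφ
  have hder : ∀ s, HasDerivAt φ (Real.exp (-(c * s)) * (c * (F t₀ + ε / 2 - F s))) s := by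
    intro s
    have he : HasDerivAt (fun s : ℝ => Real.exp (-(c * s))) (Real.exp (-(c * s)) * (-c)) s := by
      have h0 : HasDerivAt (fun s : ℝ => -(c * s)) (-c) s := by
        simpa using ((hasDerivAt_id s).const_mul c).fun_neg
      exact h0.exp
    have h2 : HasDerivAt (fun s => L s - F t₀ - ε / 2) (c * (L s - F s)) s := by
      simpa using ((hode s).sub_const (F t₀)).sub_const (ε / 2)
    have h3 := he.fun_mul h2
    refine h3.congr_deriv ?_
    ring
  have hdiff : Differentiable ℝ φ := fun s => (hder s).differentiableAt
  have hmono : MonotoneOn φ (Set.Icc t₀ (t₀ + δ)) := by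
    apply monotoneOn_of_deriv_nonneg (convex_Icc _ _) hdiff.continuous.continuousOn
      hdiff.differentiableOn
    intro x hx
    rw [interior_Icc] at hx
    rw [(hder x).deriv]
    have hx' : x ∈ Set.Icc t₀ (t₀ + δ) := Set.Ioo_subset_Icc_self hx
    have h5 := hF x hx'
    have h4 : (0:ℝ) ≤ c * (F t₀ + ε / 2 - F x) := by nlinarith
    exact mul_nonneg (Real.exp_nonneg _) h4
  have h1 : φ t₀ ≤ φ (t₀ + δ) :=
    hmono (Set.mem_Icc.mpr ⟨le_refl _, by linarith⟩)
      (Set.mem_Icc.mpr ⟨by linarith, le_refl _⟩) (by linarith)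
  have hx : Real.exp (-(c * t₀)) * (ε / 2) ≤ φ t₀ := by
    have h6 : ε / 2 ≤ L t₀ - F t₀ - ε / 2 := by linarith
    exact mul_le_mul_of_nonneg_left h6 (Real.exp_nonneg _)
  have h3 : Real.exp (-(c * t₀)) * (ε / 2)
      ≤ Real.exp (-(c * (t₀ + δ))) * (L (t₀ + δ) - F t₀ - ε / 2) := le_trans hx h1
  have hE := Real.exp_pos (c * t₀ + c * δ)
  have e1 : Real.exp (c * t₀ + c * δ) * Real.exp (-(c * t₀)) = Real.exp (c * δ) := by
    rw [← Real.exp_add]; ring_nf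
  have e2 : Real.exp (c * t₀ + c * δ) * Real.exp (-(c * (t₀ + δ))) = 1 := by
    rw [← Real.exp_add]
    have : c * t₀ + c * δ + -(c * (t₀ + δ)) = 0 := by ring
    rw [this, Real.exp_zero]
  have h4 := mul_le_mul_of_nonneg_left h3 hE.le
  rw [← mul_assoc, ← mul_assoc, e1, e2, one_mul] at h4
  exact h4

theorem stmt10 (T w g σ' : ℝ) (hT : 0 < T) (hσ : 0 < σ')
    (μ : ℝ → ℝ) (hμc : Continuous μ) (hμb : ∃ Mμ : ℝ, ∀ t, |μ t| ≤ Mμ)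
    (lam : ℝ → ℝ → ℝ)
    (hode : ∀ c > (0:ℝ), ∀ t, HasDerivAt (lam c) (c * (lam c t - σ' * w * μ t - g)) t)
    (hbdd : ∃ M : ℝ, ∀ c > (0:ℝ), ∀ t ∈ Set.Icc (0:ℝ) T, |lam c t| ≤ M) :
    ∀ t ∈ Set.Ioo (0:ℝ) T,
      Filter.Tendsto (fun c => lam c t - σ' * w * μ t - g) Filter.atTop (nhds 0) := by
  obtain ⟨M, hM⟩ := hbdd
  intro t₀ ht₀
  obtain ⟨ht₀0, ht₀T⟩ := ht₀
  set F : ℝ → ℝ := fun s => σ' * w * μ s + g with hFdef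
  have hFc : Continuous F := (continuous_const.mul hμc).add continuous_const
  rw [NormedAddCommGroup.tendsto_nhds_zero]
  intro ε hε
  obtain ⟨δ', hδ'pos, hδ'⟩ :=
    Metric.continuousAt_iff.mp (hFc.continuousAt (x := t₀)) (ε / 2) (by linarith)
  set δ : ℝ := min (δ' / 2) (T - t₀) with hδdef
  have hδpos : 0 < δ := lt_min (by linarith) (by linarith)
  have hδT : δ ≤ T - t₀ := min_le_right _ _
  have hδhalf : δ ≤ δ' / 2 := min_le_left _ _
  clear_value F δ
  have hFnear : ∀ s ∈ Set.Icc t₀ (t₀ + δ), |F s - F t₀| ≤ ε / 2 := by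
    intro s hs
    obtain ⟨hs1, hs2⟩ := Set.mem_Icc.mp hs
    have : dist s t₀ < δ' := by
      rw [Real.dist_eq, abs_of_nonneg (by linarith)]
      linarith
    have := hδ' this
    rw [Real.dist_eq] at this
    exact this.le
  have htend : Filter.Tendsto (fun c : ℝ => Real.exp (c * δ) * (ε / 2)) Filter.atTop Filter.atTop := by
    apply Filter.Tendsto.atTop_mul_const (by linarith)
    exact Real.tendsto_exp_atTop.comp (Filter.Tendsto.atTop_mul_const hδpos Filter.tendsto_id)
  have hev1 := htend.eventually_gt_atTop (M + |F t₀| + ε)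
  filter_upwards [hev1, Filter.eventually_gt_atTop (0 : ℝ)] with c hc1 hc0
  have hc1' : M + |F t₀| + ε < Real.exp (c * δ) * (ε / 2) := hc1
  have hode' : ∀ s, HasDerivAt (lam c) (c * (lam c s - F s)) s := by
    intro s
    have := hode c hc0 s
    simpa [hFdef, sub_sub] using this
  have hbnd : |lam c (t₀ + δ)| ≤ M :=
    hM c hc0 (t₀ + δ) (Set.mem_Icc.mpr ⟨by linarith, by linarith⟩)
  rw [Real.norm_eq_abs]
  by_contra hcon
  push_neg at hcon
  have hcon' : ε ≤ |lam c t₀ - F t₀| := by simpa [hFdef, sub_sub] using hcon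
  rcases le_abs.mp hcon' with h | h
  · have := key_aux c δ ε hc0 hδpos hε F (lam c) t₀ hode'
      (fun s hs => (abs_le.mp (hFnear s hs)).2) h
    have habs := abs_le.mp hbnd
    have A1 : Real.exp (c * δ) * (ε / 2) ≤ lam c (t₀ + δ) - F t₀ - ε / 2 := this
    have A2 : lam c (t₀ + δ) ≤ M := habs.2
    have A3 : -|F t₀| ≤ F t₀ := neg_abs_le _
    linarith [hc1', A1, A2, A3, hε]
  · have hode'' : ∀ s, HasDerivAt (fun s => -lam c s) (c * ((-lam c s) - (-F s))) s := by
      intro s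
      have := (hode' s).fun_neg
      refine this.congr_deriv ?_
      ring
    have := key_aux c δ ε hc0 hδpos hε (fun s => -F s) (fun s => -lam c s) t₀ hode''
      (fun s hs => by
        have := (abs_le.mp (hFnear s hs)).1
        simpa using by linarith)
      (by simpa using by linarith)
    have key2 : Real.exp (c * δ) * (ε / 2) ≤ -lam c (t₀ + δ) - -F t₀ - ε / 2 := this
    have habs := abs_le.mp hbnd
    linarith [habs.1, habs.2, neg_abs_le (F t₀), le_abs_self (F t₀)]
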